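/- Every pair (P,Q) of commuting ordinary differential operators with coefficients in C[[x]], at least one of which is monic of positive order, is algebraically dependent over C: there exists a nonzero polynomial F(z,w) in C[z,w] with F(P,Q) = 0. -/

import Mathlib

/- Ordinary differential operators with coefficients in ℂ[[x]], realized as
ℂ-linear endomorphisms of ℂ[[x]] generated by multiplication operators and d/dx. -/

noncomputable section

abbrev PS := PowerSeries ℂ

/-- Multiplication by a power series, as a ℂ-linear endomorphism of ℂ[[x]]. -/
def mulOp (u : PS) : Module.End ℂ PS :=
  { toFun := fun g => u * g
    map_add' := mul_add u
    map_smul' := by intros; exact (Algebra.mul_smul_comm _ _ _) }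

/-- Formal differentiation ∂ₓ as a ℂ-linear endomorphism of ℂ[[x]]. -/
def derOp : Module.End ℂ PS := (PowerSeries.derivative (R := ℂ)).toLinearMap

/-- The space of ordinary differential operators of order at most `n`:
the ℂ-span of the operators `u(x) ∘ ∂ₓ^i`, `i ≤ n`. -/
def Dfil (n : ℕ) : Submodule ℂ (Module.End ℂ PS) :=
  Submodule.span ℂ {L | ∃ (u : PS) (i : ℕ), i ≤ n ∧ L = mulOp u * derOp ^ i}

/-- The algebra `D = ℂ[[x]][∂ₓ]` of ordinary differential operators. -/
def DiffOps : Subalgebra ℂ (Module.End ℂ PS) :=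
  Algebra.adjoin ℂ (Set.range mulOp ∪ {derOp})

/-- The order of a differential operator (junk value for non-differential operators). -/
def ordD (L : Module.End ℂ PS) : ℕ := sInf {n | L ∈ Dfil n}

/-- A differential operator is monic if its leading coefficient is `1`, i.e. if
subtracting `∂ₓ^(ord L)` lowers the order (for order `0` this means `L = 1`). -/
def MonicD (L : Module.End ℂ PS) : Prop :=
  L ∈ Dfil (ordD L) ∧
    (if ordD L = 0 then L = 1 else L - derOp ^ ordD L ∈ Dfil (ordD L - 1))

/-- Evaluation of a two-variable polynomial `F(z,w)` at a pair of elements of a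
(not necessarily commutative) ℂ-algebra, with all `z`-powers placed to the left. -/
def eval2 {A : Type*} [Ring A] [Algebra ℂ A] (F : MvPolynomial (Fin 2) ℂ) (P Q : A) : A :=
  (AddMonoidAlgebra.coeff F).sum fun m c => c • (P ^ m 0 * Q ^ m 1)

-- basic lemmas
lemma mulOp_apply (u g : PS) : mulOp u g = u * g := rfl

lemma mulOp_mul (u v : PS) : mulOp u * mulOp v = mulOp (u * v) := by
  ext g; simp [mulOp_apply, Module.End.mul_apply, mul_assoc]

lemma mulOp_one : mulOp 1 = (1 : Module.End ℂ PS) := by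
  ext g; simp [mulOp_apply]

lemma mulOp_add (u v : PS) : mulOp (u + v) = mulOp u + mulOp v := by
  ext g; simp [mulOp_apply, add_mul]

lemma mulOp_zero : mulOp 0 = (0 : Module.End ℂ PS) := by
  ext g; simp [mulOp_apply]

lemma mulOp_smul (c : ℂ) (u : PS) : mulOp (c • u) = c • mulOp u := by
  ext g; simp [mulOp_apply, smul_mul_assoc]

abbrev der (u : PS) : PS := PowerSeries.derivative (R := ℂ) u

lemma derOp_apply (g : PS) : derOp g = der g := rfl

lemma derOp_mulOp (u : PS) :
    derOp * mulOp u = mulOp u * derOp + mulOp (der u) := by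
  ext g : 1
  simp only [Module.End.mul_apply, LinearMap.add_apply, mulOp_apply, derOp_apply]
  have := Derivation.leibniz (PowerSeries.derivative (R := ℂ)) u g
  simpa [der, smul_eq_mul, mul_comm] using this

-- Dfil basics
lemma gen_mem {u : PS} {i n : ℕ} (h : i ≤ n) : mulOp u * derOp ^ i ∈ Dfil n :=
  Submodule.subset_span ⟨u, i, h, rfl⟩

lemma Dfil_mono {m n : ℕ} (h : m ≤ n) : Dfil m ≤ Dfil n := by
  apply Submodule.span_mono
  rintro L ⟨u, i, hi, rfl⟩
  exact ⟨u, i, hi.trans h, rfl⟩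

lemma derOp_pow_mem {i n : ℕ} (h : i ≤ n) : derOp ^ i ∈ Dfil n := by
  have := gen_mem (u := 1) h
  rwa [mulOp_one, one_mul] at this

lemma one_mem_Dfil (n : ℕ) : (1 : Module.End ℂ PS) ∈ Dfil n := by
  simpa using derOp_pow_mem (Nat.zero_le n)

lemma Dfil_induction {n : ℕ} {p : Module.End ℂ PS → Prop}
    (hgen : ∀ u i, i ≤ n → p (mulOp u * derOp ^ i))
    (h0 : p 0)
    (hadd : ∀ a b, p a → p b → p (a + b))
    (hsmul : ∀ (c : ℂ) a, p a → p (c • a)) :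
    ∀ L ∈ Dfil n, p L := by
  intro L hL
  refine Submodule.span_induction ?_ h0 (fun a b _ _ ha hb => hadd a b ha hb)
    (fun c a _ ha => hsmul c a ha) hL
  rintro L ⟨u, i, hi, rfl⟩
  exact hgen u i hi

lemma mulOp_mul_mem {u : PS} {n : ℕ} {L : Module.End ℂ PS} (hL : L ∈ Dfil n) :
    mulOp u * L ∈ Dfil n := by
  refine Dfil_induction (p := fun L => mulOp u * L ∈ Dfil n) ?_ ?_ ?_ ?_ L hL
  · intro v i hi
    rw [← mul_assoc, mulOp_mul]
    exact gen_mem hi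
  · simp [Submodule.zero_mem]
  · intro a b ha hb; rw [mul_add]; exact Submodule.add_mem _ ha hb
  · intro c a ha; rw [mul_smul_comm]; exact Submodule.smul_mem _ _ ha

lemma mul_derOp_pow_mem {j n : ℕ} {L : Module.End ℂ PS} (hL : L ∈ Dfil n) :
    L * derOp ^ j ∈ Dfil (n + j) := by
  refine Dfil_induction (p := fun L => L * derOp ^ j ∈ Dfil (n + j)) ?_ ?_ ?_ ?_ L hL
  · intro v i hi
    rw [mul_assoc, ← pow_add]
    exact gen_mem (by omega)
  · simp [Submodule.zero_mem]
  · intro a b ha hb; rw [add_mul]; exact Submodule.add_mem _ ha hb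
  · intro c a ha; rw [smul_mul_assoc]; exact Submodule.smul_mem _ _ ha

lemma derOp_mul_mem {n : ℕ} {L : Module.End ℂ PS} (hL : L ∈ Dfil n) :
    derOp * L ∈ Dfil (n + 1) := by
  refine Dfil_induction (p := fun L => derOp * L ∈ Dfil (n + 1)) ?_ ?_ ?_ ?_ L hL
  · intro v i hi
    rw [← mul_assoc, derOp_mulOp, add_mul, mul_assoc, ← pow_succ']
    exact Submodule.add_mem _ (gen_mem (by omega)) (gen_mem (by omega))
  · simp [Submodule.zero_mem]
  · intro a b ha hb; rw [mul_add]; exact Submodule.add_mem _ ha hb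
  · intro c a ha; rw [mul_smul_comm]; exact Submodule.smul_mem _ _ ha

-- commutation of derOp powers past multiplication
lemma prod_form (i : ℕ) (v : PS) :
    ∃ E : Module.End ℂ PS, (i = 0 → E = 0) ∧ (∀ k, i ≤ k + 1 → E ∈ Dfil k) ∧
      derOp ^ i * mulOp v = mulOp v * derOp ^ i + E := by
  induction i with
  | zero => exact ⟨0, fun _ => rfl, fun k _ => Submodule.zero_mem _, by simp⟩
  | succ i ih =>
    obtain ⟨E, hE0, hEmem, hEeq⟩ := ih
    refine ⟨mulOp (der v) * derOp ^ i + derOp * E, ?_, ?_, ?_⟩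
    · omega
    · intro k hk
      refine Submodule.add_mem _ (gen_mem (by omega)) ?_
      rcases Nat.eq_zero_or_pos i with hi | hi
      · rw [hE0 hi]; simp [Submodule.zero_mem]
      · rcases Nat.exists_eq_add_of_le (Nat.one_le_iff_ne_zero.mpr (by omega) : 1 ≤ k) with ⟨k', rfl⟩
        rw [add_comm 1 k']
        exact derOp_mul_mem (hEmem k' (by omega))
    · rw [pow_succ', mul_assoc, hEeq, mul_add, ← mul_assoc, derOp_mulOp,
        add_mul, mul_assoc, ← pow_succ']
      abel

lemma prod_gen_mem (u v : PS) (i j : ℕ) :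
    (mulOp u * derOp ^ i) * (mulOp v * derOp ^ j) ∈ Dfil (i + j) := by
  obtain ⟨E, _, hEmem, hEeq⟩ := prod_form i v
  have : (mulOp u * derOp ^ i) * (mulOp v * derOp ^ j)
      = mulOp (u * v) * derOp ^ (i + j) + mulOp u * E * derOp ^ j := by
    rw [mul_assoc, ← mul_assoc (derOp ^ i), hEeq]
    rw [pow_add, add_mul, mul_add, ← mul_assoc (mulOp u), ← mul_assoc (mulOp u), mulOp_mul,
      mul_assoc (mulOp (u*v)), mul_assoc (mulOp u) E]
  rw [this]
  refine Submodule.add_mem _ (gen_mem le_rfl) ?_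
  have h1 : mulOp u * E ∈ Dfil i := mulOp_mul_mem (hEmem i (by omega))
  exact mul_derOp_pow_mem h1

lemma Dfil_mul {a b : ℕ} {L M : Module.End ℂ PS} (hL : L ∈ Dfil a) (hM : M ∈ Dfil b) :
    L * M ∈ Dfil (a + b) := by
  refine Dfil_induction (p := fun L => L * M ∈ Dfil (a + b)) ?_ ?_ ?_ ?_ L hL
  · intro u i hi
    refine Dfil_induction (p := fun M => (mulOp u * derOp ^ i) * M ∈ Dfil (a + b)) ?_ ?_ ?_ ?_ M hM
    · intro v j hj
      exact Dfil_mono (by omega) (prod_gen_mem u v i j)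
    · simp [Submodule.zero_mem]
    · intro x y hx hy; rw [mul_add]; exact Submodule.add_mem _ hx hy
    · intro c x hx; rw [mul_smul_comm]; exact Submodule.smul_mem _ _ hx
  · simp [Submodule.zero_mem]
  · intro x y hx hy; rw [add_mul]; exact Submodule.add_mem _ hx hy
  · intro c x hx; rw [smul_mul_assoc]; exact Submodule.smul_mem _ _ hx

lemma prod_decomp (u v : PS) (i j : ℕ) :
    ∃ E : Module.End ℂ PS, (i = 0 → E = 0) ∧ (∀ k, i ≤ k + 1 → E ∈ Dfil k) ∧
      (mulOp u * derOp ^ i) * (mulOp v * derOp ^ j)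
        = mulOp (u * v) * derOp ^ (i + j) + mulOp u * E * derOp ^ j := by
  obtain ⟨E, hE0, hEmem, hEeq⟩ := prod_form i v
  refine ⟨E, hE0, hEmem, ?_⟩
  rw [mul_assoc, ← mul_assoc (derOp ^ i), hEeq]
  rw [pow_add, add_mul, mul_add, ← mul_assoc (mulOp u), ← mul_assoc (mulOp u), mulOp_mul,
    mul_assoc (mulOp (u*v)), mul_assoc (mulOp u) E]

lemma term_mem (u : PS) {E : Module.End ℂ PS} {i j k : ℕ}
    (hE0 : i = 0 → E = 0) (hEmem : ∀ t, i ≤ t + 1 → E ∈ Dfil t)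
    (hk : i + j ≤ k + 1) : mulOp u * E * derOp ^ j ∈ Dfil k := by
  rcases Nat.eq_zero_or_pos i with hi | hi
  · rw [hE0 hi, mul_zero, zero_mul]; exact Submodule.zero_mem _
  · have hj : j ≤ k := by omega
    have hE : E ∈ Dfil (k - j) := hEmem _ (by omega)
    have := mul_derOp_pow_mem (j := j) (mulOp_mul_mem (u := u) hE)
    rwa [Nat.sub_add_cancel hj] at this

lemma comm_gen (u v : PS) (i j k : ℕ) (hk : i + j ≤ k + 1) :
    (mulOp u * derOp ^ i) * (mulOp v * derOp ^ j)
      - (mulOp v * derOp ^ j) * (mulOp u * derOp ^ i) ∈ Dfil k := by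
  obtain ⟨E₁, h10, h1m, h1e⟩ := prod_decomp u v i j
  obtain ⟨E₂, h20, h2m, h2e⟩ := prod_decomp v u j i
  rw [h1e, h2e, mul_comm v u, add_comm j i]
  have : mulOp (u * v) * derOp ^ (i + j) + mulOp u * E₁ * derOp ^ j
      - (mulOp (u * v) * derOp ^ (i + j) + mulOp v * E₂ * derOp ^ i)
      = mulOp u * E₁ * derOp ^ j - mulOp v * E₂ * derOp ^ i := by abel
  rw [this]
  exact Submodule.sub_mem _ (term_mem u h10 h1m hk) (term_mem v h20 h2m (by omega))

lemma Dfil_comm {a b : ℕ} {L M : Module.End ℂ PS} (hL : L ∈ Dfil a) (hM : M ∈ Dfil b)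
    (k : ℕ) (hk : a + b ≤ k + 1) : L * M - M * L ∈ Dfil k := by
  refine Dfil_induction (p := fun L => L * M - M * L ∈ Dfil k) ?_ ?_ ?_ ?_ L hL
  · intro u i hi
    refine Dfil_induction
      (p := fun M => (mulOp u * derOp ^ i) * M - M * (mulOp u * derOp ^ i) ∈ Dfil k)
      ?_ ?_ ?_ ?_ M hM
    · intro v j hj
      exact comm_gen u v i j k (by omega)
    · simp [Submodule.zero_mem]
    · intro x y hx hy
      have : mulOp u * derOp ^ i * (x + y) - (x + y) * (mulOp u * derOp ^ i)
          = (mulOp u * derOp ^ i * x - x * (mulOp u * derOp ^ i))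
            + (mulOp u * derOp ^ i * y - y * (mulOp u * derOp ^ i)) := by
        rw [mul_add, add_mul]; abel
      rw [this]; exact Submodule.add_mem _ hx hy
    · intro c x hx
      have : mulOp u * derOp ^ i * (c • x) - (c • x) * (mulOp u * derOp ^ i)
          = c • (mulOp u * derOp ^ i * x - x * (mulOp u * derOp ^ i)) := by
        rw [mul_smul_comm, smul_mul_assoc, smul_sub]
      rw [this]; exact Submodule.smul_mem _ _ hx
  · simp [Submodule.zero_mem]
  · intro x y hx hy
    have : (x + y) * M - M * (x + y) = (x * M - M * x) + (y * M - M * y) := by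
      rw [mul_add, add_mul]; abel
    rw [this]; exact Submodule.add_mem _ hx hy
  · intro c x hx
    have : (c • x) * M - M * (c • x) = c • (x * M - M * x) := by
      rw [mul_smul_comm, smul_mul_assoc, smul_sub]
    rw [this]; exact Submodule.smul_mem _ _ hx

lemma mulOp_mem (w : PS) (n : ℕ) : mulOp w ∈ Dfil n := by
  simpa using gen_mem (u := w) (Nat.zero_le n)

lemma prod_form2 (m : ℕ) (u : PS) :
    ∃ E ∈ Dfil m, derOp ^ (m+2) * mulOp u
      = mulOp u * derOp ^ (m+2) + ((m+2 : ℕ) : ℂ) • (mulOp (der u) * derOp ^ (m+1)) + E := by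
  induction m with
  | zero =>
    refine ⟨mulOp (der (der u)), mulOp_mem _ _, ?_⟩
    have h1 : derOp ^ 2 = derOp * derOp := sq derOp
    rw [h1, mul_assoc, derOp_mulOp, mul_add, ← mul_assoc, derOp_mulOp, derOp_mulOp,
      add_mul, mul_assoc, ← sq]
    have : ((0+2 : ℕ) : ℂ) = 2 := by norm_num
    rw [this]
    have hp : derOp ^ (0+1) = derOp := pow_one derOp
    rw [hp, two_smul]
    abel
  | succ m ih =>
    obtain ⟨E, hEmem, hEeq⟩ := ih
    refine ⟨((m+2 : ℕ) : ℂ) • (mulOp (der (der u)) * derOp ^ (m+1)) + derOp * E,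
      Submodule.add_mem _ (Submodule.smul_mem _ _ (gen_mem (by omega)))
        (derOp_mul_mem hEmem), ?_⟩
    have h1 : derOp ^ (m+1+2) * mulOp u = derOp * (derOp ^ (m+2) * mulOp u) := by
      rw [← mul_assoc, ← pow_succ']
    rw [h1, hEeq, mul_add, mul_add, mul_smul_comm, ← mul_assoc, ← mul_assoc, derOp_mulOp,
      derOp_mulOp, add_mul, add_mul, mul_assoc (mulOp u), ← pow_succ',
      mul_assoc (mulOp (der u)), ← pow_succ']
    have hcast : ((m+1+2 : ℕ) : ℂ) • (mulOp (der u) * derOp ^ (m+1+1))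
        = mulOp (der u) * derOp ^ (m+2) + ((m+2 : ℕ) : ℂ) • (mulOp (der u) * derOp ^ (m+2)) := by
      have : ((m+1+2 : ℕ) : ℂ) = 1 + ((m+2 : ℕ) : ℂ) := by push_cast; ring
      rw [this, add_smul, one_smul]
    rw [hcast, smul_add]
    abel

-- action on powers of X
lemma derOp_X_pow (m : ℕ) : derOp ((PowerSeries.X : PS) ^ m) = (m : ℂ) • PowerSeries.X ^ (m - 1) := by
  have h := Derivation.leibniz_pow (PowerSeries.derivative (R := ℂ)) (a := (PowerSeries.X : PS)) m
  rw [derOp_apply]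
  show PowerSeries.derivative (R := ℂ) (PowerSeries.X ^ m) = _
  rw [h, PowerSeries.derivative_X, smul_eq_mul, mul_one, Nat.cast_smul_eq_nsmul]

lemma derOp_pow_X_pow (j k : ℕ) :
    (derOp ^ j) ((PowerSeries.X : PS) ^ k)
      = ((k.descFactorial j : ℂ)) • PowerSeries.X ^ (k - j) := by
  induction j with
  | zero => simp
  | succ j ih =>
    rw [pow_succ', Module.End.mul_apply, ih, map_smul, derOp_X_pow]
    rw [smul_smul, Nat.descFactorial_succ]
    have : k - j - 1 = k - (j+1) := by omega
    rw [this]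
    congr 1
    push_cast
    ring

-- coefficient extraction
def cfun (L : Module.End ℂ PS) : ℕ → PS
  | k => (k.factorial : ℂ)⁻¹ •
      (L ((PowerSeries.X : PS) ^ k) -
        ∑ i ∈ (Finset.range k).attach,
          cfun L i * (derOp ^ (i : ℕ)) ((PowerSeries.X : PS) ^ k))
  termination_by k => k
  decreasing_by exact Finset.mem_range.mp i.2

lemma cfun_def (L : Module.End ℂ PS) (k : ℕ) :
    cfun L k = (k.factorial : ℂ)⁻¹ •
      (L ((PowerSeries.X : PS) ^ k) -
        ∑ i ∈ Finset.range k, cfun L i * (derOp ^ i) ((PowerSeries.X : PS) ^ k)) := by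
  rw [cfun, ← Finset.sum_attach (Finset.range k)
    (fun i => cfun L i * (derOp ^ i) ((PowerSeries.X : PS) ^ k))]

lemma cfun_add (L M : Module.End ℂ PS) (k : ℕ) :
    cfun (L + M) k = cfun L k + cfun M k := by
  induction k using Nat.strong_induction_on with
  | _ k ih =>
    rw [cfun_def, cfun_def, cfun_def, LinearMap.add_apply]
    have hs : ∑ i ∈ Finset.range k, cfun (L + M) i * (derOp ^ i) ((PowerSeries.X : PS) ^ k)
        = (∑ i ∈ Finset.range k, cfun L i * (derOp ^ i) ((PowerSeries.X : PS) ^ k))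
          + ∑ i ∈ Finset.range k, cfun M i * (derOp ^ i) ((PowerSeries.X : PS) ^ k) := by
      rw [← Finset.sum_add_distrib]
      refine Finset.sum_congr rfl fun i hi => ?_
      rw [ih i (Finset.mem_range.mp hi), add_mul]
    rw [hs, ← smul_add]
    congr 1
    abel

lemma cfun_smul (c : ℂ) (L : Module.End ℂ PS) (k : ℕ) :
    cfun (c • L) k = c • cfun L k := by
  induction k using Nat.strong_induction_on with
  | _ k ih =>
    rw [cfun_def, cfun_def, LinearMap.smul_apply]
    have hs : ∑ i ∈ Finset.range k, cfun (c • L) i * (derOp ^ i) ((PowerSeries.X : PS) ^ k)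
        = c • ∑ i ∈ Finset.range k, cfun L i * (derOp ^ i) ((PowerSeries.X : PS) ^ k) := by
      rw [Finset.smul_sum]
      refine Finset.sum_congr rfl fun i hi => ?_
      rw [ih i (Finset.mem_range.mp hi), smul_mul_assoc]
    rw [hs, ← smul_sub, smul_comm]

lemma cfun_zero_op (k : ℕ) : cfun (0 : Module.End ℂ PS) k = 0 := by
  induction k using Nat.strong_induction_on with
  | _ k ih =>
    rw [cfun_def]
    have hs : ∑ i ∈ Finset.range k, cfun (0 : Module.End ℂ PS) i * (derOp ^ i) ((PowerSeries.X : PS) ^ k)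
        = 0 := by
      refine Finset.sum_eq_zero fun i hi => ?_
      rw [ih i (Finset.mem_range.mp hi), zero_mul]
    rw [hs]
    simp

/-- `cfun` as a linear map. -/
def cfunL (k : ℕ) : Module.End ℂ PS →ₗ[ℂ] PS :=
  { toFun := fun L => cfun L k
    map_add' := fun L M => cfun_add L M k
    map_smul' := fun c L => cfun_smul c L k }

lemma cfun_gen (u : PS) (j k : ℕ) :
    cfun (mulOp u * derOp ^ j) k = if k = j then u else 0 := by
  induction k using Nat.strong_induction_on with
  | _ k ih =>
    rw [cfun_def]
    have happ : (mulOp u * derOp ^ j) ((PowerSeries.X : PS) ^ k)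
        = u * (((k.descFactorial j : ℂ)) • PowerSeries.X ^ (k - j)) := by
      rw [Module.End.mul_apply, derOp_pow_X_pow, mulOp_apply]
    have hs : ∑ i ∈ Finset.range k, cfun (mulOp u * derOp ^ j) i * (derOp ^ i) ((PowerSeries.X : PS) ^ k)
        = if j ∈ Finset.range k then u * (derOp ^ j) ((PowerSeries.X : PS) ^ k) else 0 := by
      rw [← Finset.sum_ite_eq' (Finset.range k) j
        (fun i => u * (derOp ^ i) ((PowerSeries.X : PS) ^ k))]
      refine Finset.sum_congr rfl fun i hi => ?_
      rw [ih i (Finset.mem_range.mp hi)]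
      by_cases h : i = j <;> simp [h]
    rcases lt_trichotomy k j with hkj | hkj | hkj
    · have h1 : k.descFactorial j = 0 := Nat.descFactorial_eq_zero_iff_lt.mpr hkj
      have h2 : j ∉ Finset.range k := by simp [Finset.mem_range]; omega
      rw [happ, hs, if_neg h2, h1]
      simp [if_neg (by omega : ¬ k = j)]
    · subst hkj
      have h2 : k ∉ Finset.range k := by simp
      rw [happ, hs, if_neg h2, Nat.descFactorial_self, Nat.sub_self, pow_zero]
      rw [if_pos rfl]
      rw [mul_smul_comm, mul_one, sub_zero, smul_smul]
      rw [inv_mul_cancel₀ (by exact_mod_cast Nat.factorial_ne_zero k), one_smul]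
    · have h2 : j ∈ Finset.range k := Finset.mem_range.mpr hkj
      rw [happ, hs, if_pos h2, derOp_pow_X_pow, sub_self, smul_zero]
      simp [if_neg (by omega : ¬ k = j)]

lemma cfun_vanish {m : ℕ} {L : Module.End ℂ PS} (hL : L ∈ Dfil m) {k : ℕ} (hk : m < k) :
    cfun L k = 0 := by
  refine Dfil_induction (p := fun L => cfun L k = 0) ?_ ?_ ?_ ?_ L hL
  · intro u i hi
    rw [cfun_gen, if_neg (by omega)]
  · exact cfun_zero_op k
  · intro a b ha hb; rw [cfun_add, ha, hb, add_zero]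
  · intro c a ha; rw [cfun_smul, ha, smul_zero]

lemma cfun_repr {m : ℕ} {L : Module.End ℂ PS} (hL : L ∈ Dfil m) :
    L = ∑ i ∈ Finset.range (m+1), mulOp (cfun L i) * derOp ^ i := by
  refine Dfil_induction
    (p := fun L => L = ∑ i ∈ Finset.range (m+1), mulOp (cfun L i) * derOp ^ i) ?_ ?_ ?_ ?_ L hL
  · intro u j hj
    have : ∀ i, mulOp (cfun (mulOp u * derOp ^ j) i) * derOp ^ i
        = if i = j then mulOp u * derOp ^ j else 0 := by
      intro i
      rw [cfun_gen]
      by_cases h : i = j <;> simp [h, mulOp_zero]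
    simp_rw [this]
    rw [Finset.sum_ite_eq' (Finset.range (m+1)) j (fun _ => mulOp u * derOp ^ j),
      if_pos (Finset.mem_range.mpr (by omega))]
  · simp [cfun_zero_op, mulOp_zero]
  · intro a b ha hb
    conv_lhs => rw [ha, hb]
    rw [← Finset.sum_add_distrib]
    refine Finset.sum_congr rfl fun i _ => ?_
    rw [cfun_add, mulOp_add, add_mul]
  · intro c a ha
    conv_lhs => rw [ha]
    rw [Finset.smul_sum]
    refine Finset.sum_congr rfl fun i _ => ?_
    rw [cfun_smul, mulOp_smul, smul_mul_assoc]

lemma mem_Dfil_of_cfun_zero {m : ℕ} {L : Module.End ℂ PS} (hL : L ∈ Dfil (m+1))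
    (h : cfun L (m+1) = 0) : L ∈ Dfil m := by
  rw [cfun_repr hL]
  rw [Finset.sum_range_succ, h, mulOp_zero, zero_mul, add_zero]
  exact Submodule.sum_mem _ fun i hi => gen_mem (by
    have := Finset.mem_range.mp hi; omega)

lemma cfun_sub (L M : Module.End ℂ PS) (k : ℕ) :
    cfun (L - M) k = cfun L k - cfun M k := map_sub (cfunL k) L M

lemma lead_cfun_comm (n0 m : ℕ) {L : Module.End ℂ PS} (hL : L ∈ Dfil m) :
    cfun (derOp ^ (n0+1) * L - L * derOp ^ (n0+1)) (n0 + m)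
      = ((n0 + 1 : ℕ) : ℂ) • der (cfun L m) := by
  refine Dfil_induction (p := fun L => cfun (derOp ^ (n0+1) * L - L * derOp ^ (n0+1)) (n0 + m)
      = ((n0 + 1 : ℕ) : ℂ) • der (cfun L m)) ?_ ?_ ?_ ?_ L hL
  · intro u j hj
    rcases n0 with _ | m0
    · -- first order case
      have hexpr : derOp ^ (0+1) * (mulOp u * derOp ^ j) - (mulOp u * derOp ^ j) * derOp ^ (0+1)
          = mulOp (der u) * derOp ^ j := by
        rw [zero_add, pow_one, ← mul_assoc, derOp_mulOp, add_mul, mul_assoc, ← pow_succ',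
          mul_assoc, ← pow_succ]
        abel
      rw [hexpr, cfun_gen, cfun_gen, zero_add]
      by_cases h : m = j <;> simp [h, der]
    · -- higher order case
      obtain ⟨E, hEmem, hEeq⟩ := prod_form2 m0 u
      have hexpr : derOp ^ (m0+1+1) * (mulOp u * derOp ^ j) - (mulOp u * derOp ^ j) * derOp ^ (m0+1+1)
          = ((m0+2 : ℕ) : ℂ) • (mulOp (der u) * derOp ^ (m0+1+j)) + E * derOp ^ j := by
      -- m0+1+1 = m0+2
        have h2 : m0 + 1 + 1 = m0 + 2 := rfl
        rw [h2, ← mul_assoc, hEeq, add_mul, add_mul, smul_mul_assoc,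
          mul_assoc (mulOp u), ← pow_add, mul_assoc (mulOp (der u)), ← pow_add,
          mul_assoc (mulOp u), ← pow_add, add_comm j (m0+2)]
        have h3 : m0 + 1 + j = m0 + 1 + j := rfl
        abel
      rw [hexpr, cfun_add, cfun_smul, cfun_gen,
        cfun_vanish (m := m0 + m) (Dfil_mono (by omega) (mul_derOp_pow_mem hEmem)) (by omega),
        add_zero, cfun_gen]
      by_cases h : m = j
      · subst h
        rw [if_pos rfl, if_pos (by omega)]
      · rw [if_neg (by omega), if_neg (by omega)]
        simp [der]
  · simp [cfun_zero_op, der]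
  · intro a b ha hb
    have : derOp ^ (n0+1) * (a + b) - (a + b) * derOp ^ (n0+1)
        = (derOp ^ (n0+1) * a - a * derOp ^ (n0+1)) + (derOp ^ (n0+1) * b - b * derOp ^ (n0+1)) := by
      rw [mul_add, add_mul]; abel
    have hd : der (cfun a m + cfun b m) = der (cfun a m) + der (cfun b m) := map_add _ _ _
    rw [this, cfun_add, ha, hb, cfun_add, hd, smul_add]
  · intro c a ha
    have : derOp ^ (n0+1) * (c • a) - (c • a) * derOp ^ (n0+1)
        = c • (derOp ^ (n0+1) * a - a * derOp ^ (n0+1)) := by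
      rw [mul_smul_comm, smul_mul_assoc, smul_sub]
    have hd : der (c • cfun a m) = c • der (cfun a m) :=
      (PowerSeries.derivative (R := ℂ)).toLinearMap.map_smul c (cfun a m)
    rw [this, cfun_smul, ha, cfun_smul, hd, smul_comm]

lemma eq_C_of_der_zero {u : PS} (h : der u = 0) (h0 : PowerSeries.coeff (R := ℂ) 0 u = 0) : u = 0 := by
  ext k
  cases k with
  | zero => simpa using h0
  | succ k =>
    have := PowerSeries.coeff_derivative u k
    rw [show PowerSeries.derivative (R := ℂ) u = der u from rfl, h, map_zero] at this
    have hk : (PowerSeries.coeff (R := ℂ) (k+1)) u = 0 := by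
      have hne : ((k : ℂ) + 1) ≠ 0 := Nat.cast_add_one_ne_zero k
      rcases mul_eq_zero.mp this.symm with h' | h'
      · exact h'
      · exact absurd h' hne
    simpa using hk

lemma lead_const (n0 m : ℕ) {R L : Module.End ℂ PS} (hR : R ∈ Dfil n0) (hL : L ∈ Dfil m)
    (hc : (derOp ^ (n0+1) + R) * L = L * (derOp ^ (n0+1) + R)) :
    der (cfun L m) = 0 := by
  have hcomm : derOp ^ (n0+1) * L - L * derOp ^ (n0+1) = L * R - R * L := by
    have := sub_eq_zero.mpr hc
    rw [add_mul, mul_add] at this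
    have h2 : derOp ^ (n0+1) * L + R * L - (L * derOp ^ (n0+1) + L * R) = 0 := this
    rw [sub_eq_sub_iff_add_eq_add]
    have h2 : derOp ^ (n0+1) * L + R * L = L * derOp ^ (n0+1) + L * R := by
      rw [← add_mul, ← mul_add]; exact hc
    rw [h2, add_comm]
  have hmain := lead_cfun_comm n0 m hL
  rw [hcomm] at hmain
  have hzero : cfun (L * R - R * L) (n0 + m) = 0 := by
    rcases Nat.eq_zero_or_pos (n0 + m) with h00 | hpos
    · -- both of order zero: operators are multiplication ops and commute
      have hn0 : n0 = 0 := by omega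
      have hm : m = 0 := by omega
      subst hn0; subst hm
      have hLr := cfun_repr hL
      have hRr := cfun_repr hR
      simp only [zero_add, Finset.sum_range_one, pow_zero, mul_one] at hLr hRr
      rw [hLr, hRr, mulOp_mul, mulOp_mul, mul_comm, sub_self, cfun_zero_op]
    · rcases Nat.exists_eq_add_of_le hpos with ⟨t, ht⟩
      have hmem : L * R - R * L ∈ Dfil t := Dfil_comm hL hR t (by omega)
      exact cfun_vanish hmem (by omega)
  rw [hzero] at hmain
  have hne : ((n0 + 1 : ℕ) : ℂ) ≠ 0 := by exact_mod_cast Nat.succ_ne_zero n0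
  exact (smul_eq_zero.mp hmain.symm).resolve_left hne

lemma L_eq_zero (n0 : ℕ) {R : Module.End ℂ PS} (hR : R ∈ Dfil n0) :
    ∀ m (L : Module.End ℂ PS), L ∈ Dfil m →
      (derOp ^ (n0+1) + R) * L = L * (derOp ^ (n0+1) + R) →
      (∀ k, PowerSeries.coeff (R := ℂ) 0 (cfun L k) = 0) → L = 0 := by
  intro m
  induction m with
  | zero =>
    intro L hL hc hk
    have hd := lead_const n0 0 hR hL hc
    have h0 : cfun L 0 = 0 := eq_C_of_der_zero hd (hk 0)
    have := cfun_repr hL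
    rw [Finset.sum_range_one, pow_zero, mul_one, h0, mulOp_zero] at this
    exact this
  | succ m ih =>
    intro L hL hc hk
    have hd := lead_const n0 (m+1) hR hL hc
    have h0 : cfun L (m+1) = 0 := eq_C_of_der_zero hd (hk (m+1))
    exact ih L (mem_Dfil_of_cfun_zero hL h0) hc hk

lemma pow_mem_Dfil {a : ℕ} {A : Module.End ℂ PS} (hA : A ∈ Dfil a) (i : ℕ) :
    A ^ i ∈ Dfil (i * a) := by
  induction i with
  | zero => simpa using one_mem_Dfil 0
  | succ i ih =>
    rw [pow_succ, Nat.succ_mul]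
    exact Dfil_mul ih hA

lemma key (n0 q : ℕ) (hq : 1 ≤ q) (A B : Module.End ℂ PS)
    (hAtop : A - derOp ^ (n0+1) ∈ Dfil n0) (hB : B ∈ Dfil q) (hc : A * B = B * A) :
    ∃ g : Fin (2*q+1) × Fin (2*(n0+1)+1) → ℂ,
      (∃ p, g p ≠ 0) ∧ ∑ p, g p • (A ^ (p.1 : ℕ) * B ^ (p.2 : ℕ)) = 0 := by
  set n : ℕ := n0 + 1 with hn
  set R : Module.End ℂ PS := A - derOp ^ n with hRdef
  have hAeq : A = derOp ^ n + R := by rw [hRdef]; abel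
  have hA : A ∈ Dfil n :=
    hAeq ▸ Submodule.add_mem _ (derOp_pow_mem le_rfl) (Dfil_mono (by omega) hAtop)
  set N : ℕ := 4 * n * q with hN
  set v : Fin (2*q+1) × Fin (2*(n0+1)+1) → Module.End ℂ PS :=
    fun p => A ^ (p.1 : ℕ) * B ^ (p.2 : ℕ) with hv
  have hv_mem : ∀ p, v p ∈ Dfil N := by
    intro p
    have h1 : A ^ (p.1 : ℕ) ∈ Dfil ((p.1 : ℕ) * n) := pow_mem_Dfil hA _
    have h2 : B ^ (p.2 : ℕ) ∈ Dfil ((p.2 : ℕ) * q) := pow_mem_Dfil hB _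
    refine Dfil_mono ?_ (Dfil_mul h1 h2)
    have hi : (p.1 : ℕ) ≤ 2 * q := by omega
    have hj : (p.2 : ℕ) ≤ 2 * n := by omega
    calc (p.1 : ℕ) * n + (p.2 : ℕ) * q ≤ 2 * q * n + 2 * n * q :=
          add_le_add (Nat.mul_le_mul_right n hi) (Nat.mul_le_mul_right q hj)
      _ = N := by rw [hN]; ring
  set Φ : Module.End ℂ PS →ₗ[ℂ] (Fin (N+1) → ℂ) :=
    LinearMap.pi (fun k : Fin (N+1) => (PowerSeries.coeff (R := ℂ) 0).comp (cfunL (k : ℕ))) with hΦ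
  have hnotLI : ¬ LinearIndependent ℂ (fun p => Φ (v p)) := by
    intro hLI
    have hcard := hLI.fintype_card_le_finrank
    rw [Module.finrank_fintype_fun_eq_card] at hcard
    simp only [Fintype.card_prod, Fintype.card_fin] at hcard
    have hprod : (2*q+1) * (2*(n0+1)+1) = N + 2*q + 2*n + 1 := by
      rw [hN, hn]; ring
    omega
  obtain ⟨g, hgsum, p0, hgp0⟩ := Fintype.not_linearIndependent_iff.mp hnotLI
  refine ⟨g, ⟨p0, hgp0⟩, ?_⟩
  set L : Module.End ℂ PS := ∑ p, g p • v p with hLdef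
  have hLmem : L ∈ Dfil N :=
    Submodule.sum_mem _ fun p _ => Submodule.smul_mem _ _ (hv_mem p)
  have hΦL : Φ L = 0 := by
    rw [hLdef, map_sum]
    simpa [map_smul] using hgsum
  have hcfun0 : ∀ k, PowerSeries.coeff (R := ℂ) 0 (cfun L k) = 0 := by
    intro k
    rcases le_or_gt k N with hk | hk
    · have := congr_fun hΦL ⟨k, by omega⟩
      simpa [hΦ, LinearMap.pi_apply, cfunL] using this
    · rw [cfun_vanish hLmem hk, map_zero]
  have hAcomm : Commute A B := hc
  have hcommL : (derOp ^ n + R) * L = L * (derOp ^ n + R) := by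
    rw [← hAeq, hLdef, Finset.mul_sum, Finset.sum_mul]
    refine Finset.sum_congr rfl fun p _ => ?_
    rw [mul_smul_comm, smul_mul_assoc]
    congr 1
    rw [hv, ← mul_assoc, ← pow_succ', pow_succ, mul_assoc, (hAcomm.pow_right (p.2 : ℕ)).eq,
      ← mul_assoc]
  have := L_eq_zero n0 hAtop N L hLmem hcommL hcfun0
  rw [hLdef] at this
  exact this

lemma exists_Dfil {L : Module.End ℂ PS} (h : L ∈ DiffOps) : ∃ n, L ∈ Dfil n := by
  refine Algebra.adjoin_induction ?_ ?_ ?_ ?_ h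
  · rintro x (⟨u, rfl⟩ | rfl)
    · exact ⟨0, mulOp_mem u 0⟩
    · exact ⟨1, by simpa using derOp_pow_mem (le_refl 1)⟩
  · intro r
    refine ⟨0, ?_⟩
    rw [Algebra.algebraMap_eq_smul_one]
    exact Submodule.smul_mem _ _ (one_mem_Dfil 0)
  · rintro x y _ _ ⟨a, ha⟩ ⟨b, hb⟩
    exact ⟨max a b, Submodule.add_mem _ (Dfil_mono (le_max_left a b) ha)
      (Dfil_mono (le_max_right a b) hb)⟩
  · rintro x y _ _ ⟨a, ha⟩ ⟨b, hb⟩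
    exact ⟨a + b, Dfil_mul ha hb⟩

-- eval2 lemmas
lemma eval2_monomial {A : Type*} [Ring A] [Algebra ℂ A] (m : Fin 2 →₀ ℕ) (c : ℂ) (P Q : A) :
    eval2 (MvPolynomial.monomial m c) P Q = c • (P ^ m 0 * Q ^ m 1) := by
  unfold eval2
  rw [← MvPolynomial.single_eq_monomial]
  exact Finsupp.sum_single_index (by simp)

lemma eval2_sum {A : Type*} [Ring A] [Algebra ℂ A] {ι : Type*} (s : Finset ι)
    (F : ι → MvPolynomial (Fin 2) ℂ) (P Q : A) :
    eval2 (∑ p ∈ s, F p) P Q = ∑ p ∈ s, eval2 (F p) P Q := by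
  unfold eval2
  rw [AddMonoidAlgebra.coeff_sum, ← Finsupp.sum_finset_sum_index]
  · intro m; simp
  · intro m c1 c2; rw [add_smul]

/-- **Burchnall–Chaundy.** Every pair of commuting differential operators with
coefficients in `ℂ[[x]]`, at least one of which is monic of positive order, is algebraically
dependent over ℂ. -/
theorem burchnall_chaundy (P Q : Module.End ℂ PS)
    (hP : P ∈ DiffOps) (hQ : Q ∈ DiffOps)
    (hcomm : P * Q = Q * P)
    (hmonic : (MonicD P ∧ 0 < ordD P) ∨ (MonicD Q ∧ 0 < ordD Q)) :
    ∃ F : MvPolynomial (Fin 2) ℂ, F ≠ 0 ∧ eval2 F P Q = 0 := by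
  rcases hmonic with ⟨hPm, hPpos⟩ | ⟨hQm, hQpos⟩
  · -- P is monic of positive order
    obtain ⟨q0, hQf⟩ := exists_Dfil hQ
    set q : ℕ := max q0 1 with hqdef
    have hQf' : Q ∈ Dfil q := Dfil_mono (le_max_left _ _) hQf
    set n0 : ℕ := ordD P - 1 with hn0
    have hord : ordD P = n0 + 1 := by omega
    have hPtop : P - derOp ^ (n0+1) ∈ Dfil n0 := by
      have h2 := hPm.2
      rw [if_neg (by omega)] at h2
      rw [hord] at h2
      simpa using h2
    obtain ⟨g, ⟨p0, hp0⟩, hsum⟩ := key n0 q (le_max_right _ _) P Q hPtop hQf' hcomm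
    set e : Fin (2*q+1) × Fin (2*(n0+1)+1) → (Fin 2 →₀ ℕ) :=
      fun p => Finsupp.single 0 (p.1 : ℕ) + Finsupp.single 1 (p.2 : ℕ) with he
    have he0 : ∀ p, e p 0 = (p.1 : ℕ) := by
      intro p; simp [he, Finsupp.single_apply]
    have he1 : ∀ p, e p 1 = (p.2 : ℕ) := by
      intro p; simp [he, Finsupp.single_apply]
    have heinj : Function.Injective e := by
      intro p p' h
      have h0 : e p 0 = e p' 0 := by rw [h]
      have h1 : e p 1 = e p' 1 := by rw [h]
      rw [he0, he0] at h0
      rw [he1, he1] at h1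
      exact Prod.ext (Fin.ext h0) (Fin.ext h1)
    refine ⟨∑ p, MvPolynomial.monomial (e p) (g p), ?_, ?_⟩
    · intro hF0
      have hco := congrArg (MvPolynomial.coeff (e p0)) hF0
      rw [MvPolynomial.coeff_sum] at hco
      simp only [MvPolynomial.coeff_monomial, MvPolynomial.coeff_zero] at hco
      have hite : ∀ p, (if e p = e p0 then g p else 0) = if p = p0 then g p else 0 := by
        intro p
        by_cases h : p = p0
        · simp [h]
        · rw [if_neg (fun hh => h (heinj hh)), if_neg h]
      rw [Finset.sum_congr rfl (fun p _ => hite p), Finset.sum_ite_eq' Finset.univ p0 g,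
        if_pos (Finset.mem_univ p0)] at hco
      exact hp0 hco
    · rw [eval2_sum]
      have hterm : ∀ p, eval2 (MvPolynomial.monomial (e p) (g p)) P Q
          = g p • (P ^ (p.1 : ℕ) * Q ^ (p.2 : ℕ)) := by
        intro p; rw [eval2_monomial, he0, he1]
      rw [Finset.sum_congr rfl (fun p _ => hterm p)]
      exact hsum
  · -- Q is monic of positive order
    obtain ⟨q0, hPf⟩ := exists_Dfil hP
    set q : ℕ := max q0 1 with hqdef
    have hPf' : P ∈ Dfil q := Dfil_mono (le_max_left _ _) hPf
    set n0 : ℕ := ordD Q - 1 with hn0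
    have hord : ordD Q = n0 + 1 := by omega
    have hQtop : Q - derOp ^ (n0+1) ∈ Dfil n0 := by
      have h2 := hQm.2
      rw [if_neg (by omega)] at h2
      rw [hord] at h2
      simpa using h2
    obtain ⟨g, ⟨p0, hp0⟩, hsum⟩ := key n0 q (le_max_right _ _) Q P hQtop hPf' hcomm.symm
    set e : Fin (2*q+1) × Fin (2*(n0+1)+1) → (Fin 2 →₀ ℕ) :=
      fun p => Finsupp.single 0 (p.2 : ℕ) + Finsupp.single 1 (p.1 : ℕ) with he
    have he0 : ∀ p, e p 0 = (p.2 : ℕ) := by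
      intro p; simp [he, Finsupp.single_apply]
    have he1 : ∀ p, e p 1 = (p.1 : ℕ) := by
      intro p; simp [he, Finsupp.single_apply]
    have heinj : Function.Injective e := by
      intro p p' h
      have h0 : e p 0 = e p' 0 := by rw [h]
      have h1 : e p 1 = e p' 1 := by rw [h]
      rw [he0, he0] at h0
      rw [he1, he1] at h1
      exact Prod.ext (Fin.ext h1) (Fin.ext h0)
    refine ⟨∑ p, MvPolynomial.monomial (e p) (g p), ?_, ?_⟩
    · intro hF0
      have hco := congrArg (MvPolynomial.coeff (e p0)) hF0
      rw [MvPolynomial.coeff_sum] at hco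
      simp only [MvPolynomial.coeff_monomial, MvPolynomial.coeff_zero] at hco
      have hite : ∀ p, (if e p = e p0 then g p else 0) = if p = p0 then g p else 0 := by
        intro p
        by_cases h : p = p0
        · simp [h]
        · rw [if_neg (fun hh => h (heinj hh)), if_neg h]
      rw [Finset.sum_congr rfl (fun p _ => hite p), Finset.sum_ite_eq' Finset.univ p0 g,
        if_pos (Finset.mem_univ p0)] at hco
      exact hp0 hco
    · rw [eval2_sum]
      have hterm : ∀ p, eval2 (MvPolynomial.monomial (e p) (g p)) P Q
          = g p • (Q ^ (p.1 : ℕ) * P ^ (p.2 : ℕ)) := by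
        intro p
        rw [eval2_monomial, he0, he1]
        congr 1
        exact ((Commute.pow_pow (hcomm) (p.2 : ℕ) (p.1 : ℕ)).eq).symm ▸ rfl
      rw [Finset.sum_congr rfl (fun p _ => hterm p)]
      exact hsum
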